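/- Fix a nonnegative integer n. Define f_n : ℂ → ℂ by f_n(w) = 1 / ( ∑_{s=0}^{n+1} fib-binom(n+1, s)·(−1)^{⌈(n−s+1)/2⌉}·w^{n−s+1} ), define the operator D by (D g)(w) = w·g′(w), and set A_n(w; m) = (Dᵐ f_n)(w). Then for every nonnegative integer m and every w ∈ ℂ where the denominator of f_n is nonzero, A_n(w; m) · ∑_{s=0}^{n+1} fib-binom(n+1, s)·(−1)^{⌈(n−s+1)/2⌉}·w^{n−s+1} = δ_{m,0} − ∑_{j=0}^{m−1} C(m, j)·A_n(w; j) · ∑_{s=0}^{n} fib-binom(n+1, s)·(−1)^{⌈(n−s+1)/2⌉}·(n−s+1)^{m−j}·w^{n−s+1}. -/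

import Mathlib

/-- The Fibonomial coefficient `fib-binom(p, q) = ∏_{j=1}^{q} F(p-q+j) / F(j)`. -/
noncomputable def fibBinom (p q : ℕ) : ℂ :=
  ∏ j ∈ Finset.Icc 1 q, (Nat.fib (p - q + j) : ℂ) / (Nat.fib j : ℂ)

/-- The operator `D` acting on functions `g : ℂ → ℂ` by `(D g)(w) = w * g'(w)`. -/
noncomputable def Dop (g : ℂ → ℂ) : ℂ → ℂ := fun w => w * deriv g w

/-- `An n w m = (Dᵐ f_n)(w)` where
`f_n w = 1 / (∑_{s=0}^{n+1} fib-binom(n+1,s) (-1)^{⌈(n-s+1)/2⌉} w^{n-s+1})`. -/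
noncomputable def An (n : ℕ) (w : ℂ) (m : ℕ) : ℂ :=
  (Dop^[m] (fun z => 1 / ∑ s ∈ Finset.range (n + 2),
    fibBinom (n + 1) s * (-1 : ℂ) ^ ((n + 1 - s + 1) / 2) * z ^ (n + 1 - s))) w

/- auxiliary definitions -/

noncomputable def coefC (n s : ℕ) : ℂ :=
  fibBinom (n + 1) s * (-1 : ℂ) ^ ((n + 1 - s + 1) / 2)

noncomputable def Delta (n : ℕ) (z : ℂ) : ℂ :=
  ∑ s ∈ Finset.range (n + 2), coefC n s * z ^ (n + 1 - s)

noncomputable def Pk (n k : ℕ) (z : ℂ) : ℂ :=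
  ∑ s ∈ Finset.range (n + 1), coefC n s * ((n + 1 - s : ℕ) : ℂ) ^ k * z ^ (n + 1 - s)

lemma An_zero (n : ℕ) (w : ℂ) : An n w 0 = 1 / Delta n w := rfl

lemma An_succ (n m : ℕ) (w : ℂ) :
    An n w (m + 1) = w * deriv (fun z => An n z m) w := by
  rw [An, Function.iterate_succ_apply']
  rfl

lemma delta_hasDerivAt (n : ℕ) (w : ℂ) :
    HasDerivAt (Delta n)
      (∑ s ∈ Finset.range (n + 2),
        coefC n s * (((n + 1 - s : ℕ) : ℂ) * w ^ (n + 1 - s - 1))) w := by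
  apply HasDerivAt.fun_sum
  intro s _
  exact (hasDerivAt_pow (n + 1 - s) w).const_mul (coefC n s)

lemma Pk_hasDerivAt (n k : ℕ) (w : ℂ) :
    HasDerivAt (Pk n k)
      (∑ s ∈ Finset.range (n + 1),
        coefC n s * ((n + 1 - s : ℕ) : ℂ) ^ k *
          (((n + 1 - s : ℕ) : ℂ) * w ^ (n + 1 - s - 1))) w := by
  apply HasDerivAt.fun_sum
  intro s _
  exact (hasDerivAt_pow (n + 1 - s) w).const_mul _

lemma Dop_delta (n : ℕ) (w : ℂ) : w * deriv (Delta n) w = Pk n 1 w := by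
  rw [(delta_hasDerivAt n w).deriv, Finset.mul_sum, Pk]
  rw [Finset.sum_range_succ]
  have h0 : n + 1 - (n + 1) = 0 := by omega
  rw [h0]
  simp only [Nat.cast_zero, zero_mul, mul_zero, add_zero]
  refine Finset.sum_congr rfl fun s hs => ?_
  have hs' : s ≤ n := by
    have := Finset.mem_range.mp hs; omega
  have h1 : n + 1 - s - 1 = n - s := by omega
  have h2 : n + 1 - s = n - s + 1 := by omega
  rw [h1, h2, pow_succ]
  ring

lemma Dop_Pk (n k : ℕ) (w : ℂ) : w * deriv (Pk n k) w = Pk n (k + 1) w := by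
  rw [(Pk_hasDerivAt n k w).deriv, Finset.mul_sum, Pk]
  refine Finset.sum_congr rfl fun s hs => ?_
  have hs' : s ≤ n := by
    have := Finset.mem_range.mp hs; omega
  have h1 : n + 1 - s - 1 = n - s := by omega
  have h2 : n + 1 - s = n - s + 1 := by omega
  rw [h1, h2, pow_succ, pow_succ]
  ring

lemma delta_contDiff (n : ℕ) : ContDiff ℂ ⊤ (Delta n) := by
  apply ContDiff.sum
  intro s _
  exact contDiff_const.mul (contDiff_id.pow _)

lemma isOpen_U (n : ℕ) : IsOpen {z : ℂ | Delta n z ≠ 0} := by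
  have h : {z : ℂ | Delta n z ≠ 0} = Delta n ⁻¹' {(0 : ℂ)}ᶜ := rfl
  rw [h]
  exact isOpen_compl_singleton.preimage (delta_contDiff n).continuous

lemma An_contDiffOn (n m : ℕ) :
    ContDiffOn ℂ ⊤ (fun z => An n z m) {z : ℂ | Delta n z ≠ 0} := by
  induction m with
  | zero =>
    have h : (fun z => An n z 0) = fun z => 1 / Delta n z := rfl
    rw [h]
    exact contDiffOn_const.div (delta_contDiff n).contDiffOn fun x hx => hx
  | succ m ih =>
    have h : (fun z => An n z (m + 1)) = fun z => z * deriv (fun y => An n y m) z := by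
      funext z; rw [An_succ]
    rw [h]
    exact contDiffOn_id.mul (ih.deriv_of_isOpen (isOpen_U n) le_top)

lemma An_diffAt (n m : ℕ) (w : ℂ) (hw : Delta n w ≠ 0) :
    DifferentiableAt ℂ (fun z => An n z m) w :=
  ((An_contDiffOn n m).differentiableOn (by simp)).differentiableAt
    ((isOpen_U n).mem_nhds hw)

lemma pascal_sum (m : ℕ) (a p : ℕ → ℂ) :
    ∑ j ∈ Finset.range (m + 1), ((m + 1).choose j : ℂ) * a j * p (m + 1 - j)
    = a m * p 1 + ∑ j ∈ Finset.range m,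
        ((m.choose j : ℂ) * a (j + 1) * p (m - j) +
          (m.choose j : ℂ) * a j * p (m - j + 1)) := by
  have h0 : ∑ j ∈ Finset.range (m + 1), ((m + 1).choose j : ℂ) * a j * p (m + 1 - j)
      = (∑ i ∈ Finset.range m,
          (((m.choose i : ℂ) + (m.choose (i + 1) : ℂ)) * a (i + 1) * p (m - i)))
        + a 0 * p (m + 1) := by
    rw [Finset.sum_range_succ']
    simp only [Nat.succ_sub_succ, Nat.choose_succ_succ, Nat.cast_add,
      Nat.choose_zero_right, Nat.cast_one, one_mul, Nat.sub_zero]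
  have h1 : ∑ j ∈ Finset.range (m + 1), (m.choose j : ℂ) * a j * p (m + 1 - j)
      = (∑ i ∈ Finset.range m, ((m.choose (i + 1) : ℂ) * a (i + 1) * p (m - i)))
        + a 0 * p (m + 1) := by
    rw [Finset.sum_range_succ']
    simp only [Nat.succ_sub_succ, Nat.choose_zero_right, Nat.cast_one, one_mul,
      Nat.sub_zero]
  have h2 : ∑ j ∈ Finset.range (m + 1), (m.choose j : ℂ) * a j * p (m + 1 - j)
      = (∑ j ∈ Finset.range m, (m.choose j : ℂ) * a j * p (m - j + 1)) + a m * p 1 := by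
    rw [Finset.sum_range_succ, Nat.choose_self]
    congr 1
    · refine Finset.sum_congr rfl fun j hj => ?_
      have hj' : j < m := Finset.mem_range.mp hj
      have : m + 1 - j = m - j + 1 := by omega
      rw [this]
    · have : m + 1 - m = 1 := by omega
      rw [this]; push_cast; ring
  rw [h0]
  simp only [add_mul]
  rw [Finset.sum_add_distrib, Finset.sum_add_distrib]
  have h3 := h1.symm.trans h2
  linear_combination h3

lemma key (n m : ℕ) : ∀ w : ℂ, Delta n w ≠ 0 →
    An n w m * Delta n w =
      (if m = 0 then 1 else 0) -
        ∑ j ∈ Finset.range m, (m.choose j : ℂ) * An n w j * Pk n (m - j) w := by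
  induction m with
  | zero =>
    intro w hw
    simp only [Finset.range_zero, Finset.sum_empty, if_pos rfl, sub_zero, An_zero]
    exact one_div_mul_cancel hw
  | succ m ih =>
    intro w hw
    have hev : (fun z => An n z m * Delta n z) =ᶠ[nhds w]
        (fun z => (if m = 0 then (1 : ℂ) else 0) -
          ∑ j ∈ Finset.range m, (m.choose j : ℂ) * An n z j * Pk n (m - j) z) := by
      filter_upwards [(isOpen_U n).mem_nhds hw] with z hz using ih z hz
    have hderiv := hev.deriv_eq
    have hL : deriv (fun z => An n z m * Delta n z) w =
        deriv (fun z => An n z m) w * Delta n w +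
          An n w m * deriv (Delta n) w := by
      exact deriv_mul (An_diffAt n m w hw) (delta_hasDerivAt n w).differentiableAt
    have hR : deriv (fun z => (if m = 0 then (1 : ℂ) else 0) -
          ∑ j ∈ Finset.range m, (m.choose j : ℂ) * An n z j * Pk n (m - j) z) w =
        - ∑ j ∈ Finset.range m,
            ((m.choose j : ℂ) * deriv (fun z => An n z j) w * Pk n (m - j) w +
              (m.choose j : ℂ) * An n w j * deriv (Pk n (m - j)) w) := by
      rw [deriv_const_sub]
      congr 1
      rw [deriv_fun_sum (fun j hj =>
        (((differentiableAt_const _).fun_mul (An_diffAt n j w hw)).fun_mul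
          (Pk_hasDerivAt n (m - j) w).differentiableAt))]
      refine Finset.sum_congr rfl fun j hj => ?_
      rw [deriv_fun_mul ((differentiableAt_const _).fun_mul (An_diffAt n j w hw))
        (Pk_hasDerivAt n (m - j) w).differentiableAt,
        deriv_const_mul _ (An_diffAt n j w hw)]
    have hmain : An n w (m + 1) * Delta n w + An n w m * Pk n 1 w =
        - ∑ j ∈ Finset.range m,
            ((m.choose j : ℂ) * An n w (j + 1) * Pk n (m - j) w +
              (m.choose j : ℂ) * An n w j * Pk n (m - j + 1) w) := by
      have hd := hderiv
      rw [hL, hR] at hd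
      have := congrArg (fun x => w * x) hd
      simp only [mul_add, mul_neg, Finset.mul_sum] at this
      calc An n w (m + 1) * Delta n w + An n w m * Pk n 1 w
          = w * (deriv (fun z => An n z m) w * Delta n w) +
              w * (An n w m * deriv (Delta n) w) := by
            rw [An_succ, ← Dop_delta n w]
            ring
        _ = - ∑ j ∈ Finset.range m,
              (w * ((m.choose j : ℂ) * deriv (fun z => An n z j) w * Pk n (m - j) w) +
                w * ((m.choose j : ℂ) * An n w j * deriv (Pk n (m - j)) w)) := this
        _ = - ∑ j ∈ Finset.range m,
              ((m.choose j : ℂ) * An n w (j + 1) * Pk n (m - j) w +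
                (m.choose j : ℂ) * An n w j * Pk n (m - j + 1) w) := by
            congr 1
            refine Finset.sum_congr rfl fun j hj => ?_
            rw [An_succ, ← Dop_Pk]
            ring
    have hps := pascal_sum m (fun j => An n w j) (fun k => Pk n k w)
    have hsub : ∀ j ∈ Finset.range (m + 1), (m + 1) - j = m - j + 1 := by
      intro j hj; have := Finset.mem_range.mp hj; omega
    have hgoal : ∑ j ∈ Finset.range (m + 1),
        ((m + 1).choose j : ℂ) * An n w j * Pk n (m + 1 - j) w
        = ∑ j ∈ Finset.range (m + 1),
          ((m + 1).choose j : ℂ) * An n w j * Pk n (m + 1 - j) w := rfl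
    simp only [Nat.succ_ne_zero, if_false]
    rw [zero_sub]
    rw [show (∑ j ∈ Finset.range (m + 1),
        ((m + 1).choose j : ℂ) * An n w j * Pk n (m + 1 - j) w)
      = An n w m * Pk n 1 w + ∑ j ∈ Finset.range m,
          ((m.choose j : ℂ) * An n w (j + 1) * Pk n (m - j) w +
            (m.choose j : ℂ) * An n w j * Pk n (m - j + 1) w) from hps]
    linear_combination hmain

theorem An_recurrence (n m : ℕ) (w : ℂ)
    (hΔ : ∑ s ∈ Finset.range (n + 2),
      fibBinom (n + 1) s * (-1 : ℂ) ^ ((n + 1 - s + 1) / 2) * w ^ (n + 1 - s) ≠ 0) :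
    An n w m * ∑ s ∈ Finset.range (n + 2),
        fibBinom (n + 1) s * (-1 : ℂ) ^ ((n + 1 - s + 1) / 2) * w ^ (n + 1 - s) =
      (if m = 0 then 1 else 0) -
        ∑ j ∈ Finset.range m, (m.choose j : ℂ) * An n w j *
          ∑ s ∈ Finset.range (n + 1),
            fibBinom (n + 1) s * (-1 : ℂ) ^ ((n + 1 - s + 1) / 2) *
              ((n + 1 - s : ℕ) : ℂ) ^ (m - j) * w ^ (n + 1 - s) := by
  have h := key n m w hΔ
  simpa [Delta, Pk, coefC, mul_assoc] using h
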